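/- For any horizon T ≥ 1 and A ≥ 2 actions, there is a deterministic tree MDP in which no policy greedy with respect to Q^i is optimal for any i < T, where Q^1 is the Q-function of the uniformly random policy and Q^{i+1} = QVI(Q^i). Concretely, in the tree MDP where a single action sequence a_{1:T} yields terminal reward 1, and a different first action a₁' yields immediate reward 3/4 (with all other rewards 0), one has Q^i_t(s_{a_{1:t−1}}, a_t) = A^{−max{T−i−t+1, 0}} and Q^i_1(s₁, a₁') = 3/4, so for i < T the greedy policy takes a₁' at the first step and is suboptimal. -/

import Mathlib

open Finset Classical

/-- Total reward of playing a list of actions from state `s` in a deterministic MDP. -/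
def seqReturn {S : Type*} (A : ℕ) (f : S → Fin A → S) (R : S → Fin A → ℝ) :
    S → List (Fin A) → ℝ
  | _, [] => 0
  | s, a :: rest => R s a + seqReturn A f R (f s a) rest

/-- Value function of a (time-indexed, stochastic) policy by fuel recursion:
`polV A f R pi t n s` is the expected sum of the next `n` rewards from state `s`
at timestep `t` following `pi`. -/
noncomputable def polV {S : Type*} (A : ℕ) (f : S → Fin A → S) (R : S → Fin A → ℝ)
    (pi : ℕ → S → Fin A → ℝ) : ℕ → ℕ → S → ℝ
  | _, 0, _ => 0
  | t, n + 1, s => ∑ a : Fin A, pi t s a * (R s a + polV A f R pi (t + 1) n (f s a))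

/-- `Q^π_t(s,a)` in a horizon-`T` deterministic MDP. -/
noncomputable def polQ {S : Type*} (A T : ℕ) (f : S → Fin A → S) (R : S → Fin A → ℝ)
    (pi : ℕ → S → Fin A → ℝ) (t : ℕ) (s : S) (a : Fin A) : ℝ :=
  R s a + polV A f R pi (t + 1) (T - t) (f s a)

/-- Q-value-iteration iterates: `qIter ... Q1 0 = Q1`, `qIter ... Q1 (j+1) = QVI (qIter ... Q1 j)`,
where `QVI(Q)_t(s,a) = R(s,a) + max_{a'} Q_{t+1}(f(s,a), a')` (and `Q_{T+1} ≡ 0`). -/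
noncomputable def qIter {S : Type*} (A T : ℕ) (f : S → Fin A → S) (R : S → Fin A → ℝ)
    (Q1 : ℕ → S → Fin A → ℝ) : ℕ → ℕ → S → Fin A → ℝ
  | 0 => Q1
  | j + 1 => fun t s a =>
      R s a + if t < T then ⨆ a' : Fin A, qIter A T f R Q1 j (t + 1) (f s a) a' else 0

/-- Trajectory of a deterministic policy: `polState ... t` is the state at timestep `t+1`. -/
def polState {S : Type*} (A : ℕ) (f : S → Fin A → S) (p : ℕ → S → Fin A) (s1 : S) : ℕ → S
  | 0 => s1
  | t + 1 => f (polState A f p s1 t) (p (t + 1) (polState A f p s1 t))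

/--
For any horizon `T ≥ 1` and `A ≥ 2` actions, in the tree MDP whose states
are action histories (`f s a = s ++ [a]`), where the single action sequence `tgt` yields
terminal reward `1` and a different first action `a1' ≠ tgt 0` yields immediate reward `3/4`
(all other rewards `0`), the QVI iterates `Q^i` of the uniformly random policy's Q-function
satisfy, for `1 ≤ i ≤ T` and `1 ≤ t ≤ T`:
`Q^i_t(s_{tgt_{1:t−1}}, tgt_t) = A^{−max{T−i−t+1,0}}` and `Q^i_1(s₁, a1') = 3/4`;
consequently, for `i < T` every policy greedy with respect to `Q^i` is suboptimal
(its return from the start state is strictly less than the target sequence's return).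
-/
theorem no_greedy_policy_optimal_before_T
    (T A : ℕ) (hT : 1 ≤ T) (hA : 2 ≤ A)
    (tgt : Fin T → Fin A) (a1' : Fin A) (hne : a1' ≠ tgt ⟨0, hT⟩) :
    -- the tree MDP
    ∀ (f : List (Fin A) → Fin A → List (Fin A))
      (R : List (Fin A) → Fin A → ℝ),
      (f = fun s a => s ++ [a]) →
      (R = fun s a =>
        if s ++ [a] = List.ofFn tgt then 1
        else if s = [] ∧ a = a1' then 3 / 4 else 0) →
      -- Q¹ is the uniformly random policy's Q-function, Qⁱ⁺¹ = QVI(Qⁱ)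
      ∀ Q : ℕ → ℕ → List (Fin A) → Fin A → ℝ,
      (∀ i, Q i = qIter A T f R
          (polQ A T f R (fun _ _ _ => (A : ℝ)⁻¹)) (i - 1)) →
      -- (a) on-target Q-values
      (∀ i t (hi : 1 ≤ i) (hiT : i ≤ T) (ht : 1 ≤ t) (htT : t ≤ T),
          Q i t ((List.ofFn tgt).take (t - 1)) (tgt ⟨t - 1, by omega⟩)
            = ((A : ℝ))⁻¹ ^ (T + 1 - i - t)) ∧
      -- (b) the distractor's Q-value
      (∀ i, 1 ≤ i → Q i 1 [] a1' = 3 / 4) ∧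
      -- (c) for i < T, no policy greedy w.r.t. Qⁱ is optimal
      (∀ i, 1 ≤ i → i < T →
        ∀ p : ℕ → List (Fin A) → Fin A,
          (∀ t s a, 1 ≤ t → t ≤ T → Q i t s a ≤ Q i t s (p t s)) →
          seqReturn A f R []
              (List.ofFn (fun j : Fin T => p (j + 1) (polState A f p [] j)))
            < seqReturn A f R [] (List.ofFn tgt)) := by
  intro f R hf hR Q hQ
  haveI : Nonempty (Fin A) := ⟨⟨0, by omega⟩⟩
  have hApos : (0:ℝ) < A := by exact_mod_cast Nat.lt_of_lt_of_le (by norm_num) hA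
  have hAinv0 : (0:ℝ) ≤ (A:ℝ)⁻¹ := by positivity
  have hfap : ∀ s a, f s a = s ++ [a] := by rw [hf]; intro s a; rfl
  have hlenL : (List.ofFn tgt).length = T := List.length_ofFn
  have hnotpre_ext : ∀ (s : List (Fin A)) (a : Fin A),
      ¬ s <+: List.ofFn tgt → ¬ (s ++ [a]) <+: List.ofFn tgt :=
    fun s a h h' => h ((List.prefix_append s [a]).trans h')
  have hprelen : ∀ s : List (Fin A), s <+: List.ofFn tgt → s.length ≤ T :=
    fun s h => hlenL ▸ h.length_le
  have hpre_take : ∀ s : List (Fin A), s <+: List.ofFn tgt →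
      s = (List.ofFn tgt).take s.length := fun s h => List.prefix_iff_eq_take.mp h
  have htklen : ∀ k, k ≤ T → ((List.ofFn tgt).take k).length = k := by
    intro k hk; rw [List.length_take, hlenL]; omega
  have htake_concat : ∀ (k:ℕ) (hk : k < T),
      (List.ofFn tgt).take k ++ [tgt ⟨k, hk⟩] = (List.ofFn tgt).take (k+1) := by
    intro k hk
    have hk' : k < (List.ofFn tgt).length := by omega
    have h := List.take_concat_get' (List.ofFn tgt) k hk'
    rwa [List.getElem_ofFn] at h
  have hoff : ∀ (k : ℕ) (hk : k < T) (a : Fin A), a ≠ tgt ⟨k, hk⟩ →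
      ¬ ((List.ofFn tgt).take k ++ [a]) <+: List.ofFn tgt := by
    intro k hk a ha hpre
    have hlk : ((List.ofFn tgt).take k).length = k := htklen k (by omega)
    have hlt : k < ((List.ofFn tgt).take k ++ [a]).length := by
      rw [List.length_append, hlk]; simp
    have heq := hpre.getElem hlt
    have h1 : ((List.ofFn tgt).take k ++ [a])[k]'hlt = a := by
      rw [List.getElem_append_right (by omega)]
      simp [hlk]
    have h2 : (List.ofFn tgt)[k]'(by omega) = tgt ⟨k, hk⟩ := List.getElem_ofFn _
    rw [h1, h2] at heq
    exact ha heq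
  have hRzero : ∀ s a, ¬ s <+: List.ofFn tgt → R s a = 0 := by
    intro s a hs
    simp only [hR]
    rw [if_neg, if_neg]
    · rintro ⟨h1, -⟩; exact hs (h1 ▸ List.nil_prefix)
    · intro h1; exact hs (h1 ▸ List.prefix_append s [a])
  have hRne : ∀ s a, s ≠ [] → R s a = if s ++ [a] = List.ofFn tgt then 1 else 0 := by
    intro s a h; simp only [hR]; simp [h]
  have hRtar : ∀ (k:ℕ) (hk : k < T),
      R ((List.ofFn tgt).take k) (tgt ⟨k, hk⟩) = if k + 1 = T then 1 else 0 := by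
    intro k hk
    simp only [hR]
    by_cases hkT : k + 1 = T
    · rw [if_pos, if_pos hkT]
      rw [htake_concat k hk, hkT]
      exact List.take_of_length_le (by omega)
    · rw [if_neg, if_neg hkT, if_neg]
      · rintro ⟨h1, h2⟩
        have hk0 : k = 0 := by
          have := htklen k (by omega); rw [h1] at this; simpa using this.symm
        subst hk0
        exact hne (h2 ▸ rfl)
      · intro h1
        have := congrArg List.length h1
        rw [List.length_append, htklen k (by omega), hlenL] at this
        simp at this; omega
  have hRoff : ∀ (k:ℕ) (hk : k < T) (a : Fin A), a ≠ tgt ⟨k, hk⟩ → (k = 0 → a ≠ a1') →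
      R ((List.ofFn tgt).take k) a = 0 := by
    intro k hk a ha ha'
    simp only [hR]
    rw [if_neg, if_neg]
    · rintro ⟨h1, h2⟩
      have hk0 : k = 0 := by
        have := htklen k (by omega); rw [h1] at this; simpa using this.symm
      exact ha' hk0 h2
    · intro h1
      exact hoff k hk a ha (by simp [h1])
  -- value of the uniformly random policy at nonempty states
  have hVal : ∀ (n t : ℕ) (s : List (Fin A)), s ≠ [] →
      polV A f R (fun _ _ _ => (A : ℝ)⁻¹) t n s =
        if s <+: List.ofFn tgt ∧ T - s.length ≤ n ∧ s.length < T
          then ((A:ℝ))⁻¹ ^ (T - s.length) else 0 := by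
    intro n
    induction n with
    | zero =>
      intro t s hs
      rw [if_neg]
      · rfl
      · rintro ⟨hpre, h1, h2⟩; omega
    | succ n ih =>
      intro t s hs
      have hunf : polV A f R (fun _ _ _ => (A : ℝ)⁻¹) t (n+1) s =
          ∑ a : Fin A, (A:ℝ)⁻¹ * (R s a + polV A f R (fun _ _ _ => (A : ℝ)⁻¹) (t+1) n (f s a)) := rfl
      rw [hunf]
      have hrw : ∀ a : Fin A,
          (A:ℝ)⁻¹ * (R s a + polV A f R (fun _ _ _ => (A : ℝ)⁻¹) (t+1) n (f s a)) =
          (A:ℝ)⁻¹ * (R s a +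
            (if (s ++ [a]) <+: List.ofFn tgt ∧ T - (s ++ [a]).length ≤ n ∧ (s ++ [a]).length < T
              then ((A:ℝ))⁻¹ ^ (T - (s ++ [a]).length) else 0)) := by
        intro a
        rw [hfap, ih (t+1) (s ++ [a]) (by simp)]
      rw [Finset.sum_congr rfl (fun a _ => hrw a)]
      by_cases hsP : s <+: List.ofFn tgt ∧ s.length < T
      · obtain ⟨hs1, hs2⟩ := hsP
        obtain ⟨k, hk, rfl⟩ : ∃ k, k < T ∧ s = (List.ofFn tgt).take k :=
          ⟨s.length, hs2, hpre_take s hs1⟩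
        have hlk : ((List.ofFn tgt).take k).length = k := htklen k (by omega)
        have hterm : ∀ a : Fin A,
            R ((List.ofFn tgt).take k) a +
              (if ((List.ofFn tgt).take k ++ [a]) <+: List.ofFn tgt ∧
                  T - ((List.ofFn tgt).take k ++ [a]).length ≤ n ∧
                  ((List.ofFn tgt).take k ++ [a]).length < T
                then ((A:ℝ))⁻¹ ^ (T - ((List.ofFn tgt).take k ++ [a]).length) else 0) =
            if a = tgt ⟨k, hk⟩
              then (if T - (k + 1) ≤ n then ((A:ℝ))⁻¹ ^ (T - (k + 1)) else 0)
              else 0 := by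
          intro a
          have hlen1 : ((List.ofFn tgt).take k ++ [a]).length = k + 1 := by simp [hlk]
          rw [hRne _ a hs, hlen1]
          by_cases ha : a = tgt ⟨k, hk⟩
          · subst ha
            have hcat := htake_concat k hk
            rw [if_pos rfl, hcat]
            by_cases hk1 : k + 1 = T
            · rw [if_pos (by rw [hk1]; exact List.take_of_length_le hlenL.le),
                if_neg (by rintro ⟨-, -, h3⟩; omega), if_pos (by omega)]
              rw [show T - (k + 1) = 0 by omega]; norm_num
            · rw [if_neg (by
                intro h
                have := congrArg List.length h
                rw [htklen (k+1) (by omega), hlenL] at this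
                omega)]
              by_cases hn : T - (k + 1) ≤ n
              · rw [if_pos ⟨List.take_prefix _ _, hn, by omega⟩, if_pos hn]; ring
              · rw [if_neg (by rintro ⟨-, h2, -⟩; exact hn h2), if_neg hn]; ring
          · have hnp := hoff k hk a ha
            have hc1 : ¬ ((List.ofFn tgt).take k ++ [a] = List.ofFn tgt) := by
              intro h; exact hnp (by simp [h])
            have hc2 : ¬ (((List.ofFn tgt).take k ++ [a]) <+: List.ofFn tgt ∧
                T - (k + 1) ≤ n ∧ k + 1 < T) := by
              rintro ⟨h1, -⟩; exact hnp h1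
            rw [if_neg ha, if_neg hc1, if_neg hc2]
            norm_num
        simp only [hterm]
        rw [← Finset.mul_sum,
          Finset.sum_ite_eq' Finset.univ (tgt ⟨k, hk⟩)
            (fun _ => (if T - (k + 1) ≤ n then ((A:ℝ))⁻¹ ^ (T - (k + 1)) else 0)),
          if_pos (Finset.mem_univ _), hlk]
        by_cases hn : T - (k + 1) ≤ n
        · rw [if_pos hn, if_pos ⟨List.take_prefix _ _, by omega, by omega⟩]
          rw [show (A:ℝ)⁻¹ * (A:ℝ)⁻¹ ^ (T - (k + 1)) = (A:ℝ)⁻¹ ^ (T - (k + 1) + 1) from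
            (pow_succ' _ _).symm]
          congr 1; omega
        · rw [if_neg hn, if_neg (by rintro ⟨-, h2, -⟩; omega), mul_zero]
      · -- off-target or exhausted : everything is zero
        have hterm0 : ∀ a : Fin A,
            (A:ℝ)⁻¹ * (R s a + (if (s ++ [a]) <+: List.ofFn tgt ∧
              T - (s ++ [a]).length ≤ n ∧ (s ++ [a]).length < T
              then ((A:ℝ))⁻¹ ^ (T - (s ++ [a]).length) else 0)) = 0 := by
          intro a
          have hnp : ¬ (s ++ [a]) <+: List.ofFn tgt := by
            by_cases hs1 : s <+: List.ofFn tgt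
            · have hsl : s.length = T := by
                have := hprelen s hs1
                by_contra h
                exact hsP ⟨hs1, by omega⟩
              intro h
              have := hprelen _ h
              rw [List.length_append, hsl] at this
              simp at this
            · exact hnotpre_ext s a hs1
          have hR0 : R s a = 0 := by
            simp only [hR]
            have hc1 : ¬ (s ++ [a] = List.ofFn tgt) := by
              intro h1; exact hnp (by simp [h1])
            have hc2 : ¬ (s = [] ∧ a = a1') := by rintro ⟨h1, -⟩; exact hs h1
            rw [if_neg hc1, if_neg hc2]
          rw [hR0, if_neg (by tauto)]; ring
        rw [Finset.sum_congr rfl (fun a _ => hterm0 a), Finset.sum_const, smul_zero]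
        rw [if_neg (by tauto)]
  -- the master induction on the QVI iterates
  have key : ∀ m : ℕ,
      (∀ (t : ℕ) (s : List (Fin A)), ¬ s <+: List.ofFn tgt → ∀ a : Fin A,
        qIter A T f R (polQ A T f R (fun _ _ _ => (A : ℝ)⁻¹)) m t s a = 0) ∧
      (∀ (k : ℕ) (hk : k < T),
        qIter A T f R (polQ A T f R (fun _ _ _ => (A : ℝ)⁻¹)) m (k+1)
          ((List.ofFn tgt).take k) (tgt ⟨k, hk⟩) = ((A:ℝ))⁻¹ ^ (T - m - (k+1))) ∧
      (∀ (k : ℕ) (hk : k < T) (a : Fin A), a ≠ tgt ⟨k, hk⟩ → (k = 0 → a ≠ a1') →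
        qIter A T f R (polQ A T f R (fun _ _ _ => (A : ℝ)⁻¹)) m (k+1)
          ((List.ofFn tgt).take k) a = 0) ∧
      qIter A T f R (polQ A T f R (fun _ _ _ => (A : ℝ)⁻¹)) m 1 [] a1' = 3/4 := by
    intro m
    induction m with
    | zero =>
      have hq0 : ∀ t s a, qIter A T f R (polQ A T f R (fun _ _ _ => (A : ℝ)⁻¹)) 0 t s a =
          R s a + polV A f R (fun _ _ _ => (A : ℝ)⁻¹) (t+1) (T - t) (s ++ [a]) := by
        intro t s a
        show polQ A T f R (fun _ _ _ => (A : ℝ)⁻¹) t s a = _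
        rw [polQ, hfap]
      refine ⟨?_, ?_, ?_, ?_⟩
      · intro t s hs a
        rw [hq0, hRzero s a hs, hVal _ _ _ (by simp)]
        rw [if_neg (by rintro ⟨h1, -⟩; exact hnotpre_ext s a hs h1)]
        norm_num
      · intro k hk
        rw [hq0, hRtar k hk, hVal _ _ _ (by simp)]
        rw [htake_concat k hk, htklen (k+1) (by omega)]
        by_cases hkT : k + 1 = T
        · rw [if_pos hkT, if_neg (show ¬ ((List.ofFn tgt).take (k+1) <+: List.ofFn tgt ∧
              T - (k+1) ≤ T - (k+1) ∧ k + 1 < T) by rintro ⟨-, -, h3⟩; omega)]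
          rw [show T - 0 - (k+1) = 0 by omega]
          norm_num
        · rw [if_neg hkT, if_pos ⟨List.take_prefix _ _, le_refl _, by omega⟩]
          rw [show T - 0 - (k+1) = T - (k+1) by omega]
          norm_num
      · intro k hk a ha ha'
        rw [hq0, hRoff k hk a ha ha', hVal _ _ _ (by simp)]
        rw [if_neg (by rintro ⟨h1, -⟩; exact hoff k hk a ha h1)]
        norm_num
      · rw [hq0]
        have hnp : ¬ ([a1'] : List (Fin A)) <+: List.ofFn tgt := by
          have := hoff 0 hT a1' (fun h => hne h)
          simpa using this
        have hRd : R [] a1' = 3/4 := by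
          simp only [hR]
          rw [if_neg (show ¬ (([] : List (Fin A)) ++ [a1'] = List.ofFn tgt) by
              intro h1; exact hnp (by simp [← h1]))]
          simp
        rw [hRd, hVal _ _ _ (by simp),
          if_neg (show ¬ ((([] : List (Fin A)) ++ [a1']) <+: List.ofFn tgt ∧
            T - (([] : List (Fin A)) ++ [a1']).length ≤ T - 1 ∧
            (([] : List (Fin A)) ++ [a1']).length < T) by
            rintro ⟨h1, -⟩; exact hnp (by simpa using h1))]
        norm_num
    | succ m ih =>
      obtain ⟨ihD, ihA, ihB, ihC⟩ := ih
      have hq1 : ∀ t s a, qIter A T f R (polQ A T f R (fun _ _ _ => (A : ℝ)⁻¹)) (m+1) t s a =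
          R s a + if t < T then
            (⨆ a' : Fin A, qIter A T f R (polQ A T f R (fun _ _ _ => (A : ℝ)⁻¹)) m (t+1) (s ++ [a]) a')
          else 0 := by
        intro t s a
        show R s a + _ = _
        rw [hfap]
      refine ⟨?_, ?_, ?_, ?_⟩
      · intro t s hs a
        rw [hq1, hRzero s a hs]
        by_cases htT : t < T
        · rw [if_pos htT]
          have h0 : ∀ a' : Fin A,
              qIter A T f R (polQ A T f R (fun _ _ _ => (A : ℝ)⁻¹)) m (t+1) (s ++ [a]) a' = 0 :=
            ihD (t+1) (s ++ [a]) (hnotpre_ext s a hs)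
          simp only [h0, ciSup_const]; norm_num
        · rw [if_neg htT]; norm_num
      · intro k hk
        rw [hq1]
        by_cases hkT : k + 1 = T
        · rw [if_neg (by omega), hRtar k hk, if_pos hkT]
          rw [show T - (m+1) - (k+1) = 0 by omega]
          norm_num
        · rw [if_pos (by omega), hRtar k hk, if_neg hkT]
          have hk1 : k + 1 < T := by omega
          rw [htake_concat k hk]
          have hsup : (⨆ a' : Fin A, qIter A T f R (polQ A T f R (fun _ _ _ => (A : ℝ)⁻¹)) m
              (k+1+1) ((List.ofFn tgt).take (k+1)) a') = ((A:ℝ))⁻¹ ^ (T - m - (k+2)) := by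
            apply le_antisymm
            · apply ciSup_le
              intro a'
              by_cases ha' : a' = tgt ⟨k+1, hk1⟩
              · subst ha'
                rw [ihA (k+1) hk1]
              · rw [ihB (k+1) hk1 a' ha' (by omega)]
                positivity
            · have h1 := ihA (k+1) hk1
              calc ((A:ℝ))⁻¹ ^ (T - m - (k+2)) =
                  qIter A T f R (polQ A T f R (fun _ _ _ => (A : ℝ)⁻¹)) m (k+1+1)
                    ((List.ofFn tgt).take (k+1)) (tgt ⟨k+1, hk1⟩) := h1.symm
                _ ≤ _ := le_ciSup (Set.Finite.bddAbove (Set.finite_range _)) _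
          rw [hsup, show T - (m+1) - (k+1) = T - m - (k+2) by omega]
          norm_num
      · intro k hk a ha ha'
        rw [hq1, hRoff k hk a ha ha']
        by_cases hkT : k + 1 < T
        · rw [if_pos hkT]
          have h0 : ∀ a' : Fin A,
              qIter A T f R (polQ A T f R (fun _ _ _ => (A : ℝ)⁻¹)) m (k+1+1)
                ((List.ofFn tgt).take k ++ [a]) a' = 0 :=
            ihD (k+1+1) _ (hoff k hk a ha)
          simp only [h0, ciSup_const]; norm_num
        · rw [if_neg hkT]; norm_num
      · rw [hq1]
        have hnp : ¬ (([] : List (Fin A)) ++ [a1']) <+: List.ofFn tgt := by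
          have := hoff 0 hT a1' (fun h => hne h)
          simpa using this
        have hRd : R [] a1' = 3/4 := by
          simp only [hR]
          rw [if_neg (show ¬ (([] : List (Fin A)) ++ [a1'] = List.ofFn tgt) by
              intro h1; exact hnp (by simp [← h1]))]
          simp
        rw [hRd]
        by_cases h1T : 1 < T
        · rw [if_pos h1T]
          have h0 : ∀ a' : Fin A,
              qIter A T f R (polQ A T f R (fun _ _ _ => (A : ℝ)⁻¹)) m (1+1) ([] ++ [a1']) a' = 0 :=
            ihD (1+1) _ hnp
          simp only [h0, ciSup_const]; norm_num
        · rw [if_neg h1T]; norm_num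
  -- return lemmas
  have hE : ∀ (l : List (Fin A)) (s : List (Fin A)), ¬ s <+: List.ofFn tgt →
      seqReturn A f R s l = 0 := by
    intro l
    induction l with
    | nil => intro s _; rfl
    | cons a rest ihl =>
      intro s hs
      show R s a + seqReturn A f R (f s a) rest = 0
      rw [hfap, hRzero s a hs, ihl _ (hnotpre_ext s a hs)]
      norm_num
  have hF : ∀ (l : List (Fin A)) (s : List (Fin A)), s ++ l = List.ofFn tgt → l ≠ [] →
      seqReturn A f R s l = 1 := by
    intro l
    induction l with
    | nil => intro s _ h; exact absurd rfl h
    | cons a rest ihl =>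
      intro s hcat _
      show R s a + seqReturn A f R (f s a) rest = 1
      rw [hfap]
      cases rest with
      | nil =>
        rw [show seqReturn A f R (s ++ [a]) [] = 0 from rfl]
        simp only [hR]
        rw [if_pos (by simpa using hcat)]
        norm_num
      | cons b rest' =>
        have hcat' : (s ++ [a]) ++ (b :: rest') = List.ofFn tgt := by
          rw [← hcat]; simp
        have hRz : R s a = 0 := by
          simp only [hR]
          have hc1 : ¬ (s ++ [a] = List.ofFn tgt) := by
            intro h1
            have := congrArg List.length hcat'
            rw [h1, hlenL] at this
            simp [hlenL] at this
          have hc2 : ¬ (s = [] ∧ a = a1') := by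
            rintro ⟨h1, h2⟩
            subst h1
            have hpre : ([a] : List (Fin A)) <+: List.ofFn tgt :=
              ⟨b :: rest', by simpa using hcat⟩
            by_cases hta : a = tgt ⟨0, hT⟩
            · exact hne (by rw [h2] at hta; exact hta)
            · exact hoff 0 hT a (fun h => hta h) (by simpa using hpre)
          rw [if_neg hc1, if_neg hc2]
        rw [hRz, ihl (s ++ [a]) hcat' (by simp)]
        norm_num
  refine ⟨?_, ?_, ?_⟩
  · -- part (a)
    intro i t hi hiT ht htT
    rw [hQ i]
    obtain ⟨k, rfl⟩ : ∃ k, t = k + 1 := ⟨t - 1, by omega⟩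
    have h := (key (i-1)).2.1 k (by omega)
    rw [show T + 1 - i - (k + 1) = T - (i-1) - (k+1) by omega]
    exact h
  · -- part (b)
    intro i _
    rw [hQ i]
    exact (key (i-1)).2.2.2
  · -- part (c)
    intro i hi hiT p hp
    have hb34 : (3:ℝ)/4 ≤ Q i 1 [] (p 1 []) := by
      have h1 := hp 1 [] a1' (le_refl 1) hT
      have h2 : Q i 1 [] a1' = 3/4 := by rw [hQ i]; exact (key (i-1)).2.2.2
      linarith
    have hbne : p 1 [] ≠ tgt ⟨0, hT⟩ := by
      intro h
      rw [h, hQ i] at hb34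
      have h3 := (key (i-1)).2.1 0 (by omega)
      have h4 : (3:ℝ)/4 ≤ (A:ℝ)⁻¹ ^ (T - (i-1) - (0+1)) := le_of_le_of_eq hb34 h3
      have he1 : 1 ≤ T - (i-1) - (0+1) := by omega
      have hA1 : (1:ℝ) ≤ (A:ℝ) := by exact_mod_cast (by omega : 1 ≤ A)
      have hb1 : (A:ℝ)⁻¹ ^ (T - (i-1) - (0+1)) ≤ (A:ℝ)⁻¹ ^ 1 :=
        pow_le_pow_of_le_one hAinv0 (inv_le_one_of_one_le₀ hA1) he1
      have hb2 : (A:ℝ)⁻¹ ≤ 1/2 := by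
        rw [show (1:ℝ)/2 = (2:ℝ)⁻¹ by norm_num]
        exact inv_anti₀ (by norm_num) (by exact_mod_cast hA)
      rw [pow_one] at hb1
      linarith
    -- the greedy trajectory
    have hcons : ∀ (s : List (Fin A)) (a : Fin A) (l : List (Fin A)),
        seqReturn A f R s (a :: l) = R s a + seqReturn A f R (s ++ [a]) l := by
      intro s a l
      show R s a + seqReturn A f R (f s a) l = _
      rw [hfap]
    have hrhs : seqReturn A f R [] (List.ofFn tgt) = 1 := by
      apply hF _ _ (by simp)
      intro h
      have := congrArg List.length h
      rw [hlenL] at this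
      simp at this
      omega
    have hbnp : ¬ ([p 1 []] : List (Fin A)) <+: List.ofFn tgt := by
      have := hoff 0 hT (p 1 []) (fun h => hbne h)
      simpa using this
    have hRx : R [] (p 1 []) ≤ 3/4 := by
      simp only [hR]
      rw [if_neg (show ¬ (([] : List (Fin A)) ++ [p 1 []] = List.ofFn tgt) by
          intro h1; exact hbnp (by simp [← h1]))]
      by_cases h2 : p 1 [] = a1'
      · norm_num [h2]
      · norm_num [h2]
    have hsub : ∀ l : List (Fin A), seqReturn A f R [] (p 1 [] :: l) ≤ 3/4 := by
      intro l
      rw [hcons]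
      have h0 : seqReturn A f R ([] ++ [p 1 []]) l = 0 := hE l _ (by simpa using hbnp)
      rw [h0]
      linarith
    rw [hrhs]
    obtain ⟨T', rfl⟩ : ∃ T', T = T' + 1 := ⟨T - 1, by omega⟩
    have hsplit : List.ofFn (fun j : Fin (T' + 1) => p (↑j + 1) (polState A f p [] ↑j)) =
        p 1 [] :: List.ofFn
          (fun j : Fin T' => p (↑(Fin.succ j) + 1) (polState A f p [] ↑(Fin.succ j))) := by
      rw [List.ofFn_succ]
      congr 1 <;> simp [polState]
    rw [hsplit]
    exact lt_of_le_of_lt (hsub _) (by norm_num)
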